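/- There exists a finite group G of order 29²·15 = 12615 (a semidirect product of an elementary abelian group of order 29² by a cyclic group of order 15 acting irreducibly) such that every maximal subgroup of G is a Hall subgroup of G and every 2-maximal subgroup of G is a Hall subgroup of G. -/

import Mathlib

/-- A subgroup `H` of a group `G` is a Hall subgroup if its order and index are coprime. -/
def IsHallSubgroup {G : Type*} [Group G] (H : Subgroup G) : Prop :=
  Nat.Coprime (Nat.card H) H.index

/-- `H` is a maximal subgroup of `M` (both viewed as subgroups of the ambient group). -/
def IsMaximalIn {G : Type*} [Group G] (H M : Subgroup G) : Prop :=
  H < M ∧ ∀ K : Subgroup G, H < K → K ≤ M → K = M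

/-- `H` is a 2-maximal subgroup of `G`: it is maximal in some maximal subgroup of `G`. -/
def Is2Maximal {G : Type*} [Group G] (H : Subgroup G) : Prop :=
  ∃ M : Subgroup G, IsCoatom M ∧ IsMaximalIn H M

/-- A group is supersolvable if it has a chain of normal subgroups from `⊥` to `⊤`
with all successive quotients cyclic. -/
def IsSupersolvable (G : Type*) [Group G] : Prop :=
  ∃ (n : ℕ) (H : Fin (n + 1) → Subgroup G) (hnorm : ∀ i, (H i).Normal),
    H 0 = ⊥ ∧ H (Fin.last n) = ⊤ ∧ Monotone H ∧
    ∀ i : Fin n, IsCyclic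
      ((H i.succ).map (@QuotientGroup.mk' G _ (H i.castSucc) (hnorm i.castSucc)))

/-- The asserted properties of the example group of order $29^2 \cdot 15$. -/
def GoodExampleGroup (G : Type) [Group G] : Prop :=
  Nat.card G = 12615 ∧
  (∃ A : Subgroup G, A.Normal ∧ Nat.card A = 29 ^ 2 ∧ (∀ a ∈ A, a ^ 29 = 1) ∧
    (∀ K : Subgroup G, K.Normal → K ≤ A → K = ⊥ ∨ K = A) ∧
    ∃ Z : Subgroup G, IsCyclic Z ∧ Nat.card Z = 15 ∧ A ⊓ Z = ⊥ ∧ A ⊔ Z = ⊤) ∧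
  (∀ M : Subgroup G, IsCoatom M → IsHallSubgroup M) ∧
  (∀ H : Subgroup G, Is2Maximal H → IsHallSubgroup H)

open SemidirectProduct Pointwise

set_option linter.unusedSectionVars false


lemma hall_numeric {d e : ℕ} (hde : d * e = 12615) (h29 : 29 ∣ d → 841 ∣ d) :
    Nat.Coprime d e := by
  by_contra hnc
  obtain ⟨p, pp, pd, pe⟩ := Nat.Prime.not_coprime_iff_dvd.mp hnc
  have hpd : p ∣ 12615 := hde ▸ Dvd.dvd.mul_right pd e
  have hp : p = 3 ∨ p = 5 ∨ p = 29 := by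
    have h : p ∣ 3 * (5 * (29 * 29)) := by norm_num; exact hpd
    rcases (Nat.Prime.dvd_mul pp).mp h with h | h
    · exact Or.inl ((Nat.prime_dvd_prime_iff_eq pp (by norm_num)).mp h)
    rcases (Nat.Prime.dvd_mul pp).mp h with h | h
    · exact Or.inr (Or.inl ((Nat.prime_dvd_prime_iff_eq pp (by norm_num)).mp h))
    rcases (Nat.Prime.dvd_mul pp).mp h with h | h <;>
      exact Or.inr (Or.inr ((Nat.prime_dvd_prime_iff_eq pp (by norm_num)).mp h))
  rcases hp with rfl | rfl | rfl
  · have : 3 * 3 ∣ d * e := mul_dvd_mul pd pe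
    rw [hde] at this; norm_num at this
  · have : 5 * 5 ∣ d * e := mul_dvd_mul pd pe
    rw [hde] at this; norm_num at this
  · have h841 : 841 ∣ d := h29 pd
    have : 841 * 29 ∣ d * e := mul_dvd_mul h841 pe
    rw [hde] at this; norm_num at this



section Abstract

variable {G : Type} [Group G] [Finite G]

lemma hall_of_29 (hG : Nat.card G = 12615) (H : Subgroup G)
    (h29 : 29 ∣ Nat.card H → 841 ∣ Nat.card H) : IsHallSubgroup H :=
  hall_numeric (by rw [Subgroup.card_mul_index, hG]) h29

lemma norm_of_comm (A K : Subgroup G) (hK : K ≤ A)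
    (hcomm : ∀ a ∈ A, ∀ b ∈ A, a * b = b * a) : A ≤ Subgroup.normalizer (K : Set G) := by
  intro a ha
  rw [Subgroup.mem_normalizer_iff]
  intro h
  constructor
  · intro hh
    have : a * h * a⁻¹ = h := by
      rw [hcomm a ha h (hK hh)]; group
    rw [this]; exact hh
  · intro hh
    have hhA : h ∈ A := by
      have := A.mul_mem (A.mul_mem (A.inv_mem ha) (hK hh)) ha
      simpa [mul_assoc] using this
    have : a * h * a⁻¹ = h := by
      rw [hcomm a ha h hhA]; group
    rw [this] at hh; exact hh

lemma sup_le_normalizer_inf (A H : Subgroup G) [hA : A.Normal]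
    (hcomm : ∀ a ∈ A, ∀ b ∈ A, a * b = b * a) :
    H ⊔ A ≤ Subgroup.normalizer ((H ⊓ A : Subgroup G) : Set G) := by
  refine sup_le ?_ (norm_of_comm A _ inf_le_right hcomm)
  intro h hh
  rw [Subgroup.mem_normalizer_iff]
  intro x
  constructor
  · rintro ⟨hx1, hx2⟩
    exact ⟨H.mul_mem (H.mul_mem hh hx1) (H.inv_mem hh), hA.conj_mem x hx2 h⟩
  · rintro ⟨hx1, hx2⟩
    have e : x = h⁻¹ * (h * x * h⁻¹) * h := by group
    constructor
    · rw [e]; exact H.mul_mem (H.mul_mem (H.inv_mem hh) hx1) hh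
    · rw [e]
      have := hA.conj_mem _ hx2 h⁻¹
      simpa using this

lemma inf_bot_card_dvd (A H : Subgroup G) [A.Normal] (h : H ⊓ A = ⊥)
    (hAi : A.index = 15) : Nat.card H ∣ 15 := by
  set f : H →* G ⧸ A := (QuotientGroup.mk' A).comp H.subtype with hf
  have hinj : Function.Injective f := by
    rw [injective_iff_map_eq_one]
    intro x hx
    have hxA : (x : G) ∈ A := by
      rw [← QuotientGroup.eq_one_iff]
      exact hx
    have : (x : G) ∈ H ⊓ A := ⟨x.2, hxA⟩
    rw [h] at this
    exact Subtype.ext this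
  have := Subgroup.card_dvd_of_injective f hinj
  rwa [← Subgroup.index_eq_card, hAi] at this

lemma card_top_eq (hG : Nat.card G = 12615) : Nat.card (⊤ : Subgroup G) = 12615 := by
  rw [← hG]; exact Nat.card_congr Subgroup.topEquiv.toEquiv

variable (hG : Nat.card G = 12615) (A : Subgroup G) [hAn : A.Normal]
  (hAcard : Nat.card A = 841)
  (hAexp : ∀ a ∈ A, a ^ 29 = 1)
  (hAcomm : ∀ a ∈ A, ∀ b ∈ A, a * b = b * a)
  (hirr : ∀ K : Subgroup G, K ≤ A → K ≠ ⊥ → K ≠ A → Subgroup.normalizer (K : Set G) = A)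
  (x3 : G) (hx3 : orderOf x3 = 3)

include hG hAcard in
lemma A_index : A.index = 15 := by
  have := A.card_mul_index
  rw [hAcard, hG] at this
  omega

include hG hAcard in
lemma A_ne_top : A ≠ ⊤ := by
  intro h
  rw [h, card_top_eq hG] at hAcard
  norm_num at hAcard

include hG hAcard hAexp hx3 in
lemma A_not_coatom : ¬ IsCoatom A := by
  intro hco
  have hx3A : x3 ∉ A := by
    intro hmem
    have h29 := hAexp x3 hmem
    have hd : orderOf x3 ∣ 29 := orderOf_dvd_of_pow_eq_one h29
    rw [hx3] at hd
    norm_num at hd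
  have hlt : A < A ⊔ Subgroup.zpowers x3 := by
    refine lt_of_le_of_ne le_sup_left (fun h => hx3A ?_)
    exact h ▸ Subgroup.mem_sup_right (Subgroup.mem_zpowers x3)
  have htop := hco.2 _ hlt
  have hcard : Nat.card (A ⊔ Subgroup.zpowers x3 : Subgroup G) ≤ 2523 := by
    have hset : ((A ⊔ Subgroup.zpowers x3 : Subgroup G) : Set G)
        = (A : Set G) * (Subgroup.zpowers x3 : Set G) := Subgroup.normal_mul _ _
    calc Nat.card (A ⊔ Subgroup.zpowers x3 : Subgroup G)
        = Nat.card ((A : Set G) * (Subgroup.zpowers x3 : Set G) : Set G) := by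
          rw [← hset, SetLike.coe_sort_coe]
      _ ≤ Nat.card (A : Set G) * Nat.card (Subgroup.zpowers x3 : Set G) :=
          Set.natCard_mul_le
      _ = 841 * 3 := by
          rw [SetLike.coe_sort_coe, SetLike.coe_sort_coe, hAcard, Nat.card_zpowers, hx3]
      _ = 2523 := by norm_num
  rw [htop, card_top_eq hG] at hcard
  norm_num at hcard

include hG hAcard hAcomm hirr in
lemma coatom_key (M : Subgroup G) (hM : IsCoatom M) : A ≤ M ∨ Nat.card M ∣ 15 := by
  by_cases hAM : A ≤ M
  · exact Or.inl hAM
  right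
  have hsup : M ⊔ A = ⊤ := by
    refine hM.2 _ (lt_of_le_of_ne le_sup_left (fun h => hAM ?_))
    exact h ▸ le_sup_right
  have hnorm : ⊤ ≤ Subgroup.normalizer ((M ⊓ A : Subgroup G) : Set G) := by
    rw [← hsup]
    exact sup_le_normalizer_inf A M hAcomm
  rcases eq_or_ne (M ⊓ A) ⊥ with hb | hb
  · exact inf_bot_card_dvd A M hb (A_index hG A hAcard)
  · exfalso
    have hne : M ⊓ A ≠ A := fun h => hAM (h ▸ inf_le_left)
    have := hirr (M ⊓ A) inf_le_right hb hne
    rw [this] at hnorm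
    exact A_ne_top hG A hAcard (top_le_iff.mp hnorm)

include hG hAcard hAcomm hirr in
lemma coatom_hall (M : Subgroup G) (hM : IsCoatom M) : IsHallSubgroup M := by
  refine hall_of_29 hG M (fun h29 => ?_)
  rcases coatom_key hG A hAcard hAcomm hirr M hM with hAM | hdvd
  · exact hAcard ▸ Subgroup.card_dvd_of_le hAM
  · exfalso
    have : (29 : ℕ) ∣ 15 := dvd_trans h29 hdvd
    norm_num at this

include hG hAcard hAexp hAcomm hirr hx3 in
lemma twomax_hall (H : Subgroup G) (h2 : Is2Maximal H) : IsHallSubgroup H := by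
  obtain ⟨M, hM, hHM, hmax⟩ := h2
  refine hall_of_29 hG H (fun h29 => ?_)
  have hHcard : Nat.card H ∣ Nat.card M := Subgroup.card_dvd_of_le hHM.le
  rcases coatom_key hG A hAcard hAcomm hirr M hM with hAM | hdvd
  · by_cases hAH : A ≤ H
    · exact hAcard ▸ Subgroup.card_dvd_of_le hAH
    · exfalso
      have hlt : H < H ⊔ A := by
        refine lt_of_le_of_ne le_sup_left (fun h => hAH ?_)
        exact h ▸ le_sup_right
      have hsup : H ⊔ A = M := hmax _ hlt (sup_le hHM.le hAM)
      rcases eq_or_ne (H ⊓ A) ⊥ with hb | hb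
      · have : Nat.card H ∣ 15 := inf_bot_card_dvd A H hb (A_index hG A hAcard)
        have : (29 : ℕ) ∣ 15 := dvd_trans h29 this
        norm_num at this
      · have hne : H ⊓ A ≠ A := fun h => hAH (h ▸ inf_le_left)
        have hNA := hirr (H ⊓ A) inf_le_right hb hne
        have hMle : M ≤ A := by
          rw [← hNA, ← hsup]
          exact sup_le_normalizer_inf A H hAcomm
        have hMA : M = A := le_antisymm hMle hAM
        exact A_not_coatom hG A hAcard hAexp x3 hx3 (hMA ▸ hM)
  · exfalso
    have : (29 : ℕ) ∣ 15 := dvd_trans h29 (dvd_trans hHcard hdvd)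
    norm_num at this

include hG hAcard hirr in
lemma min_normal (K : Subgroup G) (hKn : K.Normal) (hKA : K ≤ A) : K = ⊥ ∨ K = A := by
  by_contra hcon
  push_neg at hcon
  have := hirr K hKA hcon.1 hcon.2
  rw [Subgroup.normalizer_eq_top_iff.mpr hKn] at this
  exact A_ne_top hG A hAcard this.symm

end Abstract


local instance fact29 : Fact (Nat.Prime 29) := ⟨by norm_num⟩

abbrev K29 : Type := GaloisField 29 2

lemma card_K29 : Nat.card K29 = 841 := by
  have := GaloisField.card 29 2 (by norm_num)
  rw [this]; norm_num

lemma exists_zeta : ∃ ζ : K29ˣ, orderOf ζ = 15 := by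
  have hcard : Nat.card K29ˣ = 840 := by
    classical
    haveI : Fintype K29 := Fintype.ofFinite _
    rw [Nat.card_eq_fintype_card, Fintype.card_units, ← Nat.card_eq_fintype_card, card_K29]
  obtain ⟨g, hg⟩ := IsCyclic.exists_ofOrder_eq_natCard (α := K29ˣ)
  refine ⟨g ^ 56, ?_⟩
  rw [orderOf_pow, hg, hcard]
  norm_num

/-- The conversion from additive automorphisms to multiplicative ones, as a hom. -/
def addAutToMulAut (α : Type*) [AddGroup α] : Multiplicative (AddAut α) →* MulAut (Multiplicative α) where
  toFun f := AddEquiv.toMultiplicative f.toAdd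
  map_one' := by ext x; rfl
  map_mul' f g := by ext x; rfl

variable (ζ : K29ˣ)

/-- The action of `zpowers ζ` on `Multiplicative K29` by multiplication. -/
noncomputable def phi : Subgroup.zpowers ζ →* MulAut (Multiplicative K29) :=
  (addAutToMulAut K29).comp ((DistribMulAction.toAddAut K29ˣ K29).comp
    (Subgroup.zpowers ζ).subtype)

lemma phi_apply (z : Subgroup.zpowers ζ) (x : Multiplicative K29) :
    phi ζ z x = Multiplicative.ofAdd (((z : K29ˣ) : K29) * x.toAdd) := by
  rfl

/-- The example group of order 12615. -/
noncomputable abbrev G29 : Type := Multiplicative K29 ⋊[phi ζ] Subgroup.zpowers ζ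

noncomputable def G29Equiv : G29 ζ ≃ Multiplicative K29 × Subgroup.zpowers ζ where
  toFun g := (g.left, g.right)
  invFun p := ⟨p.1, p.2⟩
  left_inv g := rfl
  right_inv p := rfl

instance : Finite (G29 ζ) := Finite.of_equiv _ (G29Equiv ζ).symm

variable (hζ : orderOf ζ = 15)

include hζ in
lemma card_G29 : Nat.card (G29 ζ) = 12615 := by
  rw [Nat.card_congr (G29Equiv ζ), Nat.card_prod,
    Nat.card_congr (Multiplicative.toAdd (α := K29)), card_K29, Nat.card_zpowers, hζ]

/-- The normal subgroup of order 841. -/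
noncomputable def A29 : Subgroup (G29 ζ) := (inl : Multiplicative K29 →* G29 ζ).range

instance A29_normal : (A29 ζ).Normal := by
  rw [A29, range_inl_eq_ker_rightHom]
  infer_instance

lemma card_A29 : Nat.card (A29 ζ) = 841 := by
  have h1 : Nat.card (A29 ζ) = Nat.card (Multiplicative K29) :=
    (Nat.card_congr (MulEquiv.toEquiv (MonoidHom.ofInjective inl_injective))).symm
  rw [h1, Nat.card_congr (Multiplicative.toAdd (α := K29)), card_K29]

lemma A29_exp (a : G29 ζ) (ha : a ∈ A29 ζ) : a ^ 29 = 1 := by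
  obtain ⟨x, rfl⟩ := ha
  rw [← map_pow]
  refine (congrArg inl (?_ : x ^ 29 = 1)).trans (map_one inl)
  apply Multiplicative.toAdd.injective
  rw [toAdd_pow]
  show (29 : ℕ) • x.toAdd = Multiplicative.toAdd 1
  rw [nsmul_eq_mul, toAdd_one]
  rw [show ((29 : ℕ) : K29) = 0 from by exact_mod_cast CharP.cast_eq_zero K29 29]
  simp

lemma A29_comm (a : G29 ζ) (ha : a ∈ A29 ζ) (b : G29 ζ) (hb : b ∈ A29 ζ) :
    a * b = b * a := by
  obtain ⟨x, rfl⟩ := ha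
  obtain ⟨y, rfl⟩ := hb
  rw [← map_mul, ← map_mul, mul_comm]

/-- The cyclic subgroup of order 15. -/
noncomputable def Z29 : Subgroup (G29 ζ) := (inr : Subgroup.zpowers ζ →* G29 ζ).range

lemma Z29_cyclic : IsCyclic (Z29 ζ) :=
  isCyclic_of_surjective (inr (φ := phi ζ)).rangeRestrict
    (MonoidHom.rangeRestrict_surjective _)

include hζ in
lemma card_Z29 : Nat.card (Z29 ζ) = 15 := by
  rw [Z29, ← hζ, ← Nat.card_zpowers]
  exact (Nat.card_congr (MulEquiv.toEquiv (MonoidHom.ofInjective inr_injective))).symm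

lemma inf_A29_Z29 : A29 ζ ⊓ Z29 ζ = ⊥ := by
  rw [eq_bot_iff]
  rintro g ⟨⟨x, rfl⟩, ⟨z, hz⟩⟩
  have h2 : x = 1 := by
    have := congrArg SemidirectProduct.left hz
    simpa using this.symm
  simp [h2, Subgroup.mem_bot]

lemma sup_A29_Z29 : A29 ζ ⊔ Z29 ζ = ⊤ := by
  rw [eq_top_iff]
  intro g _
  rw [← inl_left_mul_inr_right g]
  exact Subgroup.mul_mem _ (Subgroup.mem_sup_left ⟨g.left, rfl⟩)
    (Subgroup.mem_sup_right ⟨g.right, rfl⟩)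

lemma norm_of_comm' {G : Type} [Group G] (A K : Subgroup G) (hK : K ≤ A)
    (hcomm : ∀ a ∈ A, ∀ b ∈ A, a * b = b * a) : A ≤ Subgroup.normalizer (K : Set G) := by
  intro a ha
  rw [Subgroup.mem_normalizer_iff]
  intro h
  constructor
  · intro hh
    have : a * h * a⁻¹ = h := by rw [hcomm a ha h (hK hh)]; group
    rw [this]; exact hh
  · intro hh
    have hhA : h ∈ A := by
      have := A.mul_mem (A.mul_mem (A.inv_mem ha) (hK hh)) ha
      simpa [mul_assoc] using this
    have : a * h * a⁻¹ = h := by rw [hcomm a ha h hhA]; group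
    rw [this] at hh; exact hh

include hζ in
lemma hirr29 (K' : Subgroup (G29 ζ)) (hle : K' ≤ A29 ζ) (hb : K' ≠ ⊥) (hA : K' ≠ A29 ζ) :
    Subgroup.normalizer (K' : Set (G29 ζ)) = A29 ζ := by
  refine le_antisymm ?_ (norm_of_comm' _ _ hle (A29_comm ζ))
  intro g hg
  by_contra hgA
  -- the right component of `g` is nontrivial
  have hgr : g.right ≠ 1 := by
    intro h
    apply hgA
    rw [A29, range_inl_eq_ker_rightHom, MonoidHom.mem_ker, rightHom_eq_right]
    exact h
  set z := g.right with hzdef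
  have hinr : inr z ∈ Subgroup.normalizer (K' : Set (G29 ζ)) := by
    have h1 : inl g.left ∈ Subgroup.normalizer (K' : Set (G29 ζ)) :=
      norm_of_comm' _ _ hle (A29_comm ζ) ⟨g.left, rfl⟩
    have h2 : (inl g.left)⁻¹ * g = (inr z : G29 ζ) := by
      nth_rewrite 2 [← inl_left_mul_inr_right g]
      rw [← mul_assoc, inv_mul_cancel, one_mul, ← hzdef]
    rw [← h2]
    exact mul_mem (inv_mem h1) hg
  set u : K29 := ((z : K29ˣ) : K29) with hu
  have hclose : ∀ x : K29, inl (Multiplicative.ofAdd x) ∈ K' →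
      inl (Multiplicative.ofAdd (u * x)) ∈ K' := by
    intro x hx
    have h3 := (Subgroup.mem_normalizer_iff.mp hinr (inl (Multiplicative.ofAdd x))).mp hx
    have h4 : (inr z : G29 ζ) * inl (Multiplicative.ofAdd x) * (inr z : G29 ζ)⁻¹
        = inl (phi ζ z (Multiplicative.ofAdd x)) := by
      rw [inl_aut, map_inv]
    rw [h4, phi_apply] at h3
    simpa using h3
  have hvne : (z : K29ˣ) ≠ 1 := by
    intro h
    exact hgr (Subtype.ext h)
  have hord : orderOf (z : K29ˣ) ∣ 15 := by
    rw [← hζ, ← Nat.card_zpowers ζ]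
    exact Subgroup.orderOf_dvd_natCard _ z.2
  have hu28 : u ^ 28 ≠ 1 := by
    intro h28
    have h28' : (z : K29ˣ) ^ 28 = 1 := by
      ext
      push_cast
      exact h28
    have hd : orderOf (z : K29ˣ) ∣ Nat.gcd 15 28 :=
      Nat.dvd_gcd hord (orderOf_dvd_of_pow_eq_one h28')
    norm_num at hd
    exact hgr hd
  have hufield : ∀ c : ZMod 29, algebraMap (ZMod 29) K29 c ≠ u := by
    intro c hc
    have h29 : u ^ 29 = u := by rw [← hc, ← map_pow, ZMod.pow_card]
    have hne : u ≠ 0 := Units.ne_zero _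
    apply hu28
    have h5 : u ^ 28 * u = 1 * u := by
      rw [one_mul, ← pow_succ]
      exact h29
    exact mul_right_cancel₀ hne h5
  -- a nonzero element of K'
  obtain ⟨k0, hk0K, hk0ne⟩ := K'.bot_or_exists_ne_one.resolve_left hb
  obtain ⟨m, rfl⟩ := hle hk0K
  set s : K29 := m.toAdd with hs
  have hs0 : s ≠ 0 := by
    intro h
    apply hk0ne
    have : m = 1 := by
      apply Multiplicative.toAdd.injective
      rw [toAdd_one]; exact h
    rw [this, map_one]
  have hsK : inl (Multiplicative.ofAdd s) ∈ K' := by simpa [hs] using hk0K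
  have husK : inl (Multiplicative.ofAdd (u * s)) ∈ K' := hclose s hsK
  have hli : LinearIndependent (ZMod 29) ![s, u * s] := by
    rw [LinearIndependent.pair_iff' hs0]
    intro a ha
    apply hufield a
    have h6 : algebraMap (ZMod 29) K29 a * s = u * s := by
      rw [← Algebra.smul_def]; exact ha
    exact mul_right_cancel₀ hs0 h6
  have hspan : Submodule.span (ZMod 29) (Set.range ![s, u * s]) = ⊤ := by
    refine hli.span_eq_top_of_card_eq_finrank ?_
    rw [GaloisField.finrank 29 (by norm_num : (2:ℕ) ≠ 0)]
    simp
  have hall : ∀ x : K29, inl (Multiplicative.ofAdd x) ∈ K' := by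
    intro x
    have hx : x ∈ Submodule.span (ZMod 29) (Set.range ![s, u * s]) := by
      rw [hspan]; trivial
    induction hx using Submodule.span_induction with
    | mem y hy =>
      rcases hy with ⟨i, rfl⟩
      fin_cases i
      · simpa using hsK
      · simpa using husK
    | zero => simpa using K'.one_mem
    | add y w _ _ hy' hw' =>
      have h7 : Multiplicative.ofAdd (y + w)
          = Multiplicative.ofAdd y * Multiplicative.ofAdd w := rfl
      rw [h7, map_mul]
      exact K'.mul_mem hy' hw'
    | smul c y _ hy' =>
      have h8 : c • y = c.val • y := by
        rw [← Nat.cast_smul_eq_nsmul (ZMod 29), ZMod.natCast_val, ZMod.cast_id]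
      rw [h8, ofAdd_nsmul, map_pow]
      exact K'.pow_mem hy' _
  apply hA
  refine le_antisymm hle ?_
  rintro a ⟨m', rfl⟩
  simpa using hall m'.toAdd


theorem exists_group_order_12615_all_maximal_and_two_maximal_hall :
    ∃ (G : Type) (inst : Group G), Finite G ∧ @GoodExampleGroup G inst := by
  obtain ⟨ζ, hζ⟩ := exists_zeta
  refine ⟨G29 ζ, inferInstance, inferInstance, ?_⟩
  haveI := A29_normal ζ
  have hGcard := card_G29 ζ hζ
  have hAcard := card_A29 ζ
  have hirr := hirr29 ζ hζ
  -- an element of order 3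
  haveI := Z29_cyclic ζ
  obtain ⟨w, hw⟩ := IsCyclic.exists_ofOrder_eq_natCard (α := (Z29 ζ))
  rw [card_Z29 ζ hζ] at hw
  have hwG : orderOf ((w : G29 ζ)) = 15 := by
    rw [← hw]
    exact orderOf_injective (Z29 ζ).subtype (Subgroup.subtype_injective _) w
  have hx3 : orderOf ((w : G29 ζ) ^ 5) = 3 := by
    rw [orderOf_pow, hwG]
    norm_num
  refine ⟨hGcard, ⟨A29 ζ, inferInstance, by rw [hAcard]; norm_num, A29_exp ζ,
    min_normal hGcard (A29 ζ) hAcard hirr,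
    Z29 ζ, Z29_cyclic ζ, card_Z29 ζ hζ, inf_A29_Z29 ζ, sup_A29_Z29 ζ⟩,
    coatom_hall hGcard (A29 ζ) hAcard (A29_comm ζ) hirr,
    twomax_hall hGcard (A29 ζ) hAcard (A29_exp ζ) (A29_comm ζ) hirr
      ((w : G29 ζ) ^ 5) hx3⟩
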